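/- Let Γ be a signed graph on n ≥ 3 vertices with m edges containing no balanced triangle, and suppose λ₁(Γ) ≥ |λₙ(Γ)| for the adjacency eigenvalues λ₁ ≥ ⋯ ≥ λₙ. Then λ₁(Γ)² + λ₂(Γ)² ≤ m. -/

import Mathlib

set_option maxHeartbeats 1600000

open Matrix Polynomial

/-! ### Auxiliary polynomial inequalities -/

lemma aux_L2 {a b u : ℝ} (hb : 0 ≤ b) (hbu : b ≤ u) (hua : u ≤ a) :
    b * (a^2 + b^2) ≤ b * u^2 + (a^3 + b^3 - u^3) := by
  nlinarith [mul_nonneg (sub_nonneg.2 hua) (mul_nonneg (sub_nonneg.2 (hbu.trans hua)) (by linarith : (0:ℝ) ≤ a + u)), sq_nonneg u]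

lemma aux_L3 {a b u v : ℝ} (hb : 0 ≤ b) (hbv : b ≤ v) (hvu : v ≤ u) (hua : u ≤ a)
    (hc : a^3 + b^3 ≤ u^3 + v^3) : a^2 + b^2 ≤ u^2 + v^2 := by
  by_contra h
  push_neg at h
  have hd1 : a^3 - u^3 ≤ v^3 - b^3 := by linarith
  have hd2 : v^2 - b^2 < a^2 - u^2 := by linarith
  have hv2 : b^2 ≤ v^2 := by nlinarith
  have hua' : u < a := by
    rcases eq_or_lt_of_le hua with rfl | h'
    · nlinarith
    · exact h'
  have hbv' : b < v := by
    rcases eq_or_lt_of_le hbv with rfl | h'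
    · nlinarith
    · exact h'
  have hu3 : 0 < a^3 - u^3 := by nlinarith
  have W : (a^3-u^3) * (v^2-b^2) < (v^3-b^3) * (a^2-u^2) := by
    calc (a^3-u^3) * (v^2-b^2) < (a^3-u^3) * (a^2-u^2) := by
          apply mul_lt_mul_of_pos_left hd2 hu3
      _ ≤ (v^3-b^3) * (a^2-u^2) := by nlinarith
  have e : (v^3-b^3)*(a^2-u^2) = ((a-u)*(v-b))*((v^2+v*b+b^2)*(a+u)) := by ring
  have e2 : (a^3-u^3)*(v^2-b^2) = ((a-u)*(v-b))*((a^2+a*u+u^2)*(v+b)) := by ring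
  rw [e, e2] at W
  have hpos : 0 < (a-u)*(v-b) := mul_pos (by linarith) (by linarith)
  have h5 : (a^2+a*u+u^2)*(v+b) < (v^2+v*b+b^2)*(a+u) := (mul_lt_mul_iff_right₀ hpos).mp W
  have hub : 0 < u + b := by linarith
  have s1 : (v^2+v*b+b^2)*(u+b) ≤ (u^2+u*b+b^2)*(v+b) := by
    nlinarith [mul_nonneg (mul_nonneg (sub_nonneg.2 hvu) hb) (by linarith : (0:ℝ) ≤ u + v), mul_nonneg (sub_nonneg.2 hvu) (mul_nonneg (hb.trans hbv) (by linarith : (0:ℝ) ≤ u))]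
  have hab : b ≤ a := hbv.trans (hvu.trans hua)
  have huu : 0 ≤ u := hb.trans (hbv.trans hvu)
  have s2 : (u^2+u*b+b^2)*(a+u) ≤ (a^2+a*u+u^2)*(u+b) := by
    nlinarith [mul_nonneg (mul_nonneg huu (sub_nonneg.2 hab)) (by linarith : (0:ℝ) ≤ a+b), mul_nonneg (mul_nonneg (hb.trans hab) hb) (sub_nonneg.2 hab)]
  nlinarith [mul_le_mul_of_nonneg_right s1 (by linarith : (0:ℝ) ≤ a+u), mul_le_mul_of_nonneg_right s2 (by linarith : (0:ℝ) ≤ v+b), mul_lt_mul_of_pos_right h5 hub]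

lemma aux_L4 {a b u v : ℝ} (hb : 0 ≤ b) (hbv : b ≤ v) (hvu : v ≤ u) (hua : u ≤ a)
    (hc : u^3 + v^3 ≤ a^3 + b^3) :
    (a^2 + b^2) * v ≤ u^2 * v - u^3 + a^3 + b^3 := by
  nlinarith [mul_nonneg (sub_nonneg.2 hua) (sub_nonneg.2 hbv), mul_nonneg (sub_nonneg.2 hvu) (sub_nonneg.2 hbv), mul_nonneg (sub_nonneg.2 hua) (sub_nonneg.2 hvu), sq_nonneg (a-u), sq_nonneg (v-b), sq_nonneg (u-v), mul_nonneg (mul_nonneg (sub_nonneg.2 hua) (sub_nonneg.2 hbv)) hb, mul_nonneg (mul_nonneg (sub_nonneg.2 hua) (sub_nonneg.2 hvu)) (hb.trans hbv), mul_nonneg (mul_nonneg (sub_nonneg.2 hvu) (sub_nonneg.2 hbv)) hb]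

/-! ### The key combinatorial inequality on atoms -/

lemma claimC {α : Type*} [DecidableEq α] (s : Finset α) (x : α → ℝ) (a b : ℝ)
    (hb : 0 ≤ b) (hba : b ≤ a)
    (hub : ∀ i ∈ s, x i ≤ a)
    (hcube : a^3 + b^3 ≤ ∑ i ∈ s, (x i)^3) :
    a^2 + b^2 ≤ ∑ i ∈ s, (x i)^2 := by
  have ha : 0 ≤ a := hb.trans hba
  by_cases hall : ∀ i ∈ s, x i ≤ b
  · have hpt : ∑ i ∈ s, (x i)^3 ≤ b * ∑ i ∈ s, (x i)^2 := by
      rw [Finset.mul_sum]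
      apply Finset.sum_le_sum
      intro i hi
      nlinarith [sq_nonneg (x i), hall i hi]
    rcases eq_or_lt_of_le hb with rfl | hb0
    · have h0 : a^3 ≤ 0 := by simpa using hcube.trans hpt
      have : a = 0 := by
        rcases eq_or_lt_of_le ha with h' | h'
        · exact h'.symm
        · exact absurd h0 (by simpa using not_le.2 (pow_pos h' 3))
      subst this
      have := Finset.sum_nonneg (fun i (_ : i ∈ s) => sq_nonneg (x i))
      norm_num
      linarith
    · have hs2 : 0 ≤ ∑ i ∈ s, (x i)^2 := Finset.sum_nonneg fun i _ => sq_nonneg _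
      rw [← mul_le_mul_iff_right₀ hb0]
      calc b * (a^2+b^2) ≤ a^3 + b^3 := by nlinarith [mul_nonneg (mul_nonneg ha ha) (sub_nonneg.2 hba)]
        _ ≤ b * ∑ i ∈ s, (x i)^2 := hcube.trans hpt
  · push_neg at hall
    obtain ⟨j, hj, hjb⟩ := hall
    obtain ⟨jm, hjm, hjmax⟩ := Finset.exists_max_image s x ⟨j, hj⟩
    set u := x jm with hu
    have hbu : b < u := lt_of_lt_of_le hjb (hjmax j hj)
    have hua : u ≤ a := hub jm hjm
    have hsplit : ∑ i ∈ s, (x i)^3 = u^3 + ∑ i ∈ s.erase jm, (x i)^3 := by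
      rw [← Finset.add_sum_erase s _ hjm]
    have hsplit2 : ∑ i ∈ s, (x i)^2 = u^2 + ∑ i ∈ s.erase jm, (x i)^2 := by
      rw [← Finset.add_sum_erase s _ hjm]
    by_cases hall2 : ∀ i ∈ s.erase jm, x i ≤ b
    · have hpt : ∑ i ∈ s.erase jm, (x i)^3 ≤ b * ∑ i ∈ s.erase jm, (x i)^2 := by
        rw [Finset.mul_sum]
        apply Finset.sum_le_sum
        intro i hi
        nlinarith [sq_nonneg (x i), hall2 i hi]
      have hs2 : 0 ≤ ∑ i ∈ s.erase jm, (x i)^2 := Finset.sum_nonneg fun i _ => sq_nonneg _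
      rcases eq_or_lt_of_le hb with rfl | hb0
      · have : a^3 ≤ u^3 := by
          have := hcube
          rw [hsplit] at this
          simpa using by linarith [hpt, this]
        have : a^2 ≤ u^2 := by nlinarith
        rw [hsplit2]; simpa using by linarith
      · rw [hsplit2, ← mul_le_mul_iff_right₀ hb0]
        have key := aux_L2 hb hbu.le hua
        calc b * (a^2+b^2) ≤ b * u^2 + (a^3+b^3-u^3) := key
          _ ≤ b * u^2 + ∑ i ∈ s.erase jm, (x i)^3 := by rw [hsplit] at hcube; linarith
          _ ≤ b * u^2 + b * ∑ i ∈ s.erase jm, (x i)^2 := by linarith [hpt]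
          _ = b * (u^2 + ∑ i ∈ s.erase jm, (x i)^2) := by ring
    · push_neg at hall2
      obtain ⟨j', hj', hj'b⟩ := hall2
      obtain ⟨jv, hjv, hjvmax⟩ := Finset.exists_max_image (s.erase jm) x ⟨j', hj'⟩
      set v := x jv with hv
      have hbv : b < v := lt_of_lt_of_le hj'b (hjvmax j' hj')
      have hvu : v ≤ u := hjmax jv (Finset.mem_of_mem_erase hjv)
      set t := (s.erase jm).erase jv with ht
      have hsplit3 : ∑ i ∈ s.erase jm, (x i)^3 = v^3 + ∑ i ∈ t, (x i)^3 := by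
        rw [← Finset.add_sum_erase _ _ hjv]
      have hsplit4 : ∑ i ∈ s.erase jm, (x i)^2 = v^2 + ∑ i ∈ t, (x i)^2 := by
        rw [← Finset.add_sum_erase _ _ hjv]
      have hs2 : 0 ≤ ∑ i ∈ t, (x i)^2 := Finset.sum_nonneg fun i _ => sq_nonneg _
      have hptv : ∑ i ∈ t, (x i)^3 ≤ v * ∑ i ∈ t, (x i)^2 := by
        rw [Finset.mul_sum]
        apply Finset.sum_le_sum
        intro i hi
        have : x i ≤ v := hjvmax i (Finset.mem_of_mem_erase hi)
        nlinarith [sq_nonneg (x i)]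
      by_cases hcc : a^3 + b^3 ≤ u^3 + v^3
      · have := aux_L3 hb hbv.le hvu hua hcc
        rw [hsplit2, hsplit4]
        linarith
      · push_neg at hcc
        have hvpos : 0 < v := lt_of_le_of_lt hb hbv
        rw [hsplit2, hsplit4, ← mul_le_mul_iff_left₀ hvpos]
        have hc3 : a^3+b^3-u^3-v^3 ≤ ∑ i ∈ t, (x i)^3 := by
          rw [hsplit, hsplit3] at hcube; linarith
        calc (a^2+b^2) * v ≤ u^2*v - u^3 + a^3 + b^3 := aux_L4 hb hbv.le hvu hua hcc.le
          _ = u^2*v + v^3 + (a^3+b^3-u^3-v^3) := by ring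
          _ ≤ u^2*v + v^2*v + (∑ i ∈ t, (x i)^2) * v := by nlinarith [hc3, hptv]
          _ = (u^2 + (v^2 + ∑ i ∈ t, (x i)^2)) * v := by ring

/-! ### The main spectral-moment inequality -/

lemma mainIneq {n : ℕ} (hn : 3 ≤ n) (μ : Fin n → ℝ) (hmono : Antitone μ)
    (h1 : ∑ i, μ i = 0) (h3 : ∑ i, (μ i)^3 ≤ 0)
    (hlam : |μ ⟨n-1, Nat.sub_one_lt (by positivity)⟩| ≤ μ ⟨0, Nat.lt_of_lt_of_le (by norm_num) hn⟩) :
    2 * ((μ ⟨0, Nat.lt_of_lt_of_le (by norm_num) hn⟩)^2 + (μ ⟨1, Nat.lt_of_lt_of_le (by norm_num) hn⟩)^2) ≤ ∑ i, (μ i)^2 := by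
  set i0 : Fin n := ⟨0, Nat.lt_of_lt_of_le (by norm_num) hn⟩ with hi0
  set i1 : Fin n := ⟨1, Nat.lt_of_lt_of_le (by norm_num) hn⟩ with hi1
  set iN : Fin n := ⟨n-1, Nat.sub_one_lt (by positivity)⟩ with hiN
  set a := μ i0 with haa
  set b := μ i1 with hbb
  have ha : 0 ≤ a := le_trans (abs_nonneg _) hlam
  have hba : b ≤ a := hmono (by simp [hi0, hi1, Fin.mk_le_mk])
  have hlow : ∀ i, -a ≤ μ i := by
    intro i
    have hle : i ≤ iN := by
      rw [Fin.le_def]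
      have h2 : iN.val = n - 1 := rfl
      have h3 : i.val < n := i.isLt
      omega
    have : -|μ iN| ≤ μ iN := neg_abs_le _
    linarith [hmono hle]
  have hi01 : i0 ≠ i1 := by simp [hi0, hi1, Fin.ext_iff]
  have hmem1 : i1 ∈ Finset.univ.erase i0 := Finset.mem_erase.2 ⟨hi01.symm, Finset.mem_univ _⟩
  set R : Finset (Fin n) := (Finset.univ.erase i0).erase i1 with hR
  have hsplit : ∀ f : Fin n → ℝ, ∑ i, f i = f i0 + f i1 + ∑ i ∈ R, f i := by
    intro f
    rw [← Finset.add_sum_erase _ f (Finset.mem_univ i0), ← Finset.add_sum_erase _ f hmem1, hR]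
    ring
  by_cases hbneg : b < 0
  · exfalso
    set E := Finset.univ.erase i0 with hE
    have hEle : ∀ i ∈ E, μ i ≤ b := by
      intro i hi
      apply hmono
      have : i ≠ i0 := (Finset.mem_erase.1 hi).1
      simp [hi1, Fin.le_def]
      have : i.val ≠ 0 := fun h => this (Fin.ext h)
      omega
    have hsumE : ∑ i ∈ E, (-μ i) = a := by
      have := h1
      rw [← Finset.add_sum_erase _ μ (Finset.mem_univ i0)] at this
      rw [Finset.sum_neg_distrib]
      linarith
    have hcubeE : a^3 ≤ ∑ i ∈ E, (-μ i)^3 := by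
      have := h3
      rw [← Finset.add_sum_erase _ (fun i => (μ i)^3) (Finset.mem_univ i0)] at this
      have e : ∑ i ∈ E, (-μ i)^3 = -∑ i ∈ E, (μ i)^3 := by
        rw [← Finset.sum_neg_distrib]; apply Finset.sum_congr rfl; intros; ring
      rw [e]; linarith
    set i2 : Fin n := ⟨2, by omega⟩ with hi2
    have hmem2 : i2 ∈ E.erase i1 := by
      simp [hE, hi2, hi1, hi0, Finset.mem_erase, Fin.ext_iff]
    have hptE : ∀ i ∈ (E.erase i1).erase i2, (-μ i)^3 ≤ a^2 * (-μ i) := by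
      intro i hi
      have hiE : i ∈ E := Finset.mem_of_mem_erase (Finset.mem_of_mem_erase hi)
      have h1 : -μ i ≤ a := by linarith [hlow i]
      have h2 : 0 ≤ -μ i := by linarith [hEle i hiE]
      nlinarith [mul_nonneg h2 (mul_nonneg (sub_nonneg.2 h1) (by linarith : (0:ℝ) ≤ a + -μ i))]
    have hsplitE : ∀ f : Fin n → ℝ, ∑ i ∈ E, f i = f i1 + f i2 + ∑ i ∈ (E.erase i1).erase i2, f i := by
      intro f
      rw [← Finset.add_sum_erase _ f hmem1, ← Finset.add_sum_erase _ f hmem2]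
      ring
    have hrest_nonneg : 0 ≤ ∑ i ∈ (E.erase i1).erase i2, (-μ i) := by
      apply Finset.sum_nonneg
      intro i hi
      have hiE : i ∈ E := Finset.mem_of_mem_erase (Finset.mem_of_mem_erase hi)
      linarith [hEle i hiE]
    have hrest_cube : ∑ i ∈ (E.erase i1).erase i2, (-μ i)^3 ≤ a^2 * ∑ i ∈ (E.erase i1).erase i2, (-μ i) := by
      rw [Finset.mul_sum]
      exact Finset.sum_le_sum hptE
    have ht1 : -b ≤ -μ i1 := by simp [hbb]
    have ht2 : -b ≤ -μ i2 := by
      have : μ i2 ≤ b := hEle i2 (Finset.mem_of_mem_erase hmem2)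
      linarith
    have hsum12 : -μ i1 + -μ i2 + ∑ i ∈ (E.erase i1).erase i2, (-μ i) = a := by
      rw [← hsumE, hsplitE (fun i => -μ i)]
    have hcube12 : a^3 ≤ (-μ i1)^3 + (-μ i2)^3 + a^2 * ∑ i ∈ (E.erase i1).erase i2, (-μ i) := by
      calc a^3 ≤ ∑ i ∈ E, (-μ i)^3 := hcubeE
        _ = (-μ i1)^3 + (-μ i2)^3 + ∑ i ∈ (E.erase i1).erase i2, (-μ i)^3 := hsplitE _
        _ ≤ _ := by linarith [hrest_cube]
    have hbpos : 0 < -b := by linarith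
    have ht12 : -μ i1 + -μ i2 ≤ a := by linarith [hrest_nonneg, hsum12]
    have hsr : ∑ i ∈ (E.erase i1).erase i2, (-μ i) = a - (-μ i1) - (-μ i2) := by
      linarith [hsum12]
    rw [hsr] at hcube12
    have ht1p : 0 < -μ i1 := lt_of_lt_of_le hbpos ht1
    have ht2p : 0 < -μ i2 := lt_of_lt_of_le hbpos ht2
    have hspos : 0 < -μ i1 + -μ i2 := by linarith
    have k1 : 0 ≤ (a - (-μ i1 + -μ i2)) * (a + (-μ i1 + -μ i2)) * (-μ i1 + -μ i2) :=
      mul_nonneg (mul_nonneg (by linarith) (by linarith)) hspos.le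
    have k2 : 0 < (-μ i1) * (-μ i2) * (-μ i1 + -μ i2) :=
      mul_pos (mul_pos ht1p ht2p) hspos
    nlinarith [k1, k2]
  · push_neg at hbneg
    have hcube : a^3 + b^3 ≤ ∑ i ∈ R, (-μ i)^3 := by
      have := h3
      rw [hsplit (fun i => (μ i)^3)] at this
      have e : ∑ i ∈ R, (-μ i)^3 = -∑ i ∈ R, (μ i)^3 := by
        rw [← Finset.sum_neg_distrib]; apply Finset.sum_congr rfl; intros; ring
      rw [e]; linarith
    have hub : ∀ i ∈ R, -μ i ≤ a := fun i _ => by linarith [hlow i]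
    have hkey := claimC R (fun i => -μ i) a b hbneg hba hub hcube
    have e2 : ∑ i ∈ R, (-μ i)^2 = ∑ i ∈ R, (μ i)^2 := by
      apply Finset.sum_congr rfl; intros; ring
    rw [e2] at hkey
    rw [hsplit (fun i => (μ i)^2)]
    simp only [← haa, ← hbb]
    linarith

/-! ### Characteristic polynomial and traces via the spectral theorem -/

lemma charpoly_conj_inv {m : Type*} [Fintype m] [DecidableEq m]
    (U M V : Matrix m m ℝ) (h1 : U * V = 1) :
    (U * M * V).charpoly = M.charpoly := by
  have hmapmul : ∀ (P Q : Matrix m m ℝ), (P * Q).map (C : ℝ →+* ℝ[X]) = P.map C * Q.map C :=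
    fun P Q => Matrix.map_mul
  have hmapone : (1 : Matrix m m ℝ).map (C : ℝ →+* ℝ[X]) = 1 := Matrix.map_one _ (map_zero C) (map_one C)
  have hUV : (U.map (C : ℝ →+* ℝ[X])) * (V.map C) = 1 := by rw [← hmapmul, h1, hmapone]
  have hkey : charmatrix (U * M * V) =
      (U.map C) * charmatrix M * (V.map C) := by
    unfold charmatrix
    have hcomm : (U.map (C : ℝ →+* ℝ[X])) * Matrix.scalar m (X : ℝ[X]) =
        Matrix.scalar m (X : ℝ[X]) * (U.map C) :=
      (scalar_commute (X : ℝ[X]) (fun r' => Commute.all _ _) (U.map C)).symm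
    rw [mul_sub, sub_mul, hcomm, mul_assoc ((Matrix.scalar m) (X : ℝ[X])), hUV, mul_one]
    congr 1
    simp only [RingHom.mapMatrix_apply, hmapmul, mul_assoc]
  unfold Matrix.charpoly
  rw [hkey, det_mul, det_mul]
  have : (U.map (C : ℝ →+* ℝ[X])).det * (V.map C).det = 1 := by
    rw [← det_mul, hUV, det_one]
  calc (U.map (C : ℝ →+* ℝ[X])).det * (charmatrix M).det * (V.map C).det
      = ((U.map (C : ℝ →+* ℝ[X])).det * (V.map C).det) * (charmatrix M).det := by ring
    _ = (charmatrix M).det := by rw [this, one_mul]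

lemma charpoly_diagonal {m : Type*} [Fintype m] [DecidableEq m] (d : m → ℝ) :
    (Matrix.diagonal d).charpoly = ∏ i, (X - C (d i)) := by
  have : charmatrix (Matrix.diagonal d) = Matrix.diagonal (fun i => X - C (d i)) := by
    ext i j
    by_cases h : i = j
    · subst h; simp [charmatrix_apply_eq]
    · simp [charmatrix_apply_ne _ _ _ h, Matrix.diagonal_apply_ne _ h]
  rw [Matrix.charpoly, this, det_diagonal]

section
variable {m : Type*} [Fintype m] [DecidableEq m] {A : Matrix m m ℝ} (hH : A.IsHermitian)

lemma my_charpoly_eq : A.charpoly = ∏ i, (X - C (hH.eigenvalues i)) := by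
  have hst := hH.spectral_theorem
  simp only [Unitary.conjStarAlgAut_apply, Unitary.coe_star] at hst
  set U : Matrix m m ℝ := (Matrix.IsHermitian.eigenvectorUnitary hH : Matrix m m ℝ) with hU
  have h1 : U * star U = 1 := (Matrix.mem_unitaryGroup_iff).1 (Matrix.IsHermitian.eigenvectorUnitary hH).2
  have hd : (RCLike.ofReal ∘ hH.eigenvalues : m → ℝ) = hH.eigenvalues := by
    funext i; simp
  have := congrArg Matrix.charpoly hst
  rw [charpoly_conj_inv _ _ _ h1, hd, _root_.charpoly_diagonal] at this
  exact this

lemma my_trace_pow (k : ℕ) (hk : k ≠ 0) : (A ^ k).trace = ∑ i, (hH.eigenvalues i) ^ k := by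
  have hst := hH.spectral_theorem
  simp only [Unitary.conjStarAlgAut_apply, Unitary.coe_star] at hst
  set U : Matrix m m ℝ := (Matrix.IsHermitian.eigenvectorUnitary hH : Matrix m m ℝ) with hU
  have h2 : star U * U = 1 := (Matrix.mem_unitaryGroup_iff').1 (Matrix.IsHermitian.eigenvectorUnitary hH).2
  have hd : (RCLike.ofReal ∘ hH.eigenvalues : m → ℝ) = hH.eigenvalues := by
    funext i; simp
  rw [hd] at hst
  set D := Matrix.diagonal hH.eigenvalues with hD
  have hpow : ∀ j : ℕ, j ≠ 0 → A ^ j = U * D ^ j * star U := by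
    intro j hj
    induction j with
    | zero => simp at hj
    | succ l ih =>
      rcases Nat.eq_zero_or_pos l with rfl | hl
      · simpa using hst
      · have hstep : star U * (U * D ^ l * star U) = D ^ l * star U := by
          rw [← mul_assoc, ← mul_assoc, h2, one_mul]
        rw [pow_succ', ih hl.ne', hst, pow_succ']
        calc U * D * star U * (U * D ^ l * star U)
            = U * D * (star U * (U * D ^ l * star U)) := by rw [mul_assoc]
          _ = U * D * (D ^ l * star U) := by rw [hstep]
          _ = U * (D * D ^ l) * star U := by simp only [mul_assoc]
  rw [hpow k hk, Matrix.trace_mul_comm, ← mul_assoc, h2, one_mul]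
  rw [hD, Matrix.diagonal_pow, Matrix.trace_diagonal]
  simp [Pi.pow_apply]

end

lemma powersum_eq {n : ℕ} (μ ν : Fin n → ℝ)
    (h : ∏ i, (X - C (μ i)) = ∏ i, (X - C (ν i))) (g : ℝ → ℝ) :
    ∑ i, g (μ i) = ∑ i, g (ν i) := by
  have key : Multiset.map μ Finset.univ.val = Multiset.map ν Finset.univ.val := by
    have e1 : ∏ i, (X - C (μ i)) =
        (Multiset.map (fun a : ℝ => X - C a) (Multiset.map μ Finset.univ.val)).prod := by
      rw [Multiset.map_map]
      rfl
    have e2 : ∏ i, (X - C (ν i)) =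
        (Multiset.map (fun a : ℝ => X - C a) (Multiset.map ν Finset.univ.val)).prod := by
      rw [Multiset.map_map]
      rfl
    have := congrArg Polynomial.roots h
    rwa [e1, e2, Polynomial.roots_multiset_prod_X_sub_C, Polynomial.roots_multiset_prod_X_sub_C] at this
  calc ∑ i, g (μ i) = (Multiset.map g (Multiset.map μ Finset.univ.val)).sum := by
        rw [Multiset.map_map]; rfl
    _ = (Multiset.map g (Multiset.map ν Finset.univ.val)).sum := by rw [key]
    _ = ∑ i, g (ν i) := by rw [Multiset.map_map]; rfl

/-- If a signed graph on n ≥ 3 vertices and m edges has no balanced triangle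
and λ₁ ≥ |λₙ|, then λ₁² + λ₂² ≤ m. -/
theorem stmt_13 {n : ℕ} (hn : 3 ≤ n) (G : SimpleGraph (Fin n)) [DecidableRel G.Adj]
    (σ : Fin n → Fin n → ℝ)
    (hσ : ∀ i j, G.Adj i j → σ i j = 1 ∨ σ i j = -1)
    (hsym : ∀ i j, σ i j = σ j i)
    (A : Matrix (Fin n) (Fin n) ℝ)
    (hA : A = fun i j => if G.Adj i j then σ i j else 0)
    (μ : Fin n → ℝ) (hmono : Antitone μ)
    (hchar : A.charpoly = ∏ i, (X - C (μ i)))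
    (htri : ¬ ∃ i j k : Fin n, G.Adj i j ∧ G.Adj j k ∧ G.Adj i k ∧
      σ i j * σ j k * σ i k = 1)
    (hlam : |μ ⟨n - 1, by omega⟩| ≤ μ ⟨0, by omega⟩) :
    (μ ⟨0, by omega⟩) ^ 2 + (μ ⟨1, by omega⟩) ^ 2 ≤ (G.edgeFinset.card : ℝ) := by
  -- A is symmetric
  have hH : A.IsHermitian := by
    rw [hA]
    apply Matrix.IsHermitian.ext
    intro i j
    simp only [star_trivial]
    by_cases h : G.Adj i j
    · simp [h, h.symm, hsym j i]
    · have h' : ¬ G.Adj j i := fun hc => h hc.symm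
      simp [h, h']
  set ν := hH.eigenvalues with hν
  have hcp : ∏ i, (X - C (μ i)) = ∏ i, (X - C (ν i)) := by
    rw [← hchar, my_charpoly_eq hH]
  have hps : ∀ g : ℝ → ℝ, ∑ i, g (μ i) = ∑ i, g (ν i) := powersum_eq _ _ hcp
  -- trace A = 0
  have htr1 : A.trace = 0 := by
    rw [hA]
    simp only [Matrix.trace, Matrix.diag]
    apply Finset.sum_eq_zero
    intro i _
    simp [G.irrefl]
  -- trace A² = 2 m
  have htr2 : (A * A).trace = 2 * (G.edgeFinset.card : ℝ) := by
    have : (A * A).trace = ∑ i, ∑ j, A i j * A j i := by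
      simp [Matrix.trace, Matrix.diag, Matrix.mul_apply]
    rw [this]
    have hterm : ∀ i j : Fin n, A i j * A j i = if G.Adj i j then (1:ℝ) else 0 := by
      intro i j
      rw [hA]
      by_cases h : G.Adj i j
      · have h' : G.Adj j i := h.symm
        simp only [h, h', if_true]
        rw [← hsym i j]
        rcases hσ i j h with h1 | h1 <;> rw [h1] <;> norm_num
      · have h' : ¬ G.Adj j i := fun hc => h hc.symm
        simp [h, h']
    have : ∑ i, ∑ j, A i j * A j i = ∑ i, (G.degree i : ℝ) := by
      apply Finset.sum_congr rfl
      intro i _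
      rw [Finset.sum_congr rfl (fun j _ => hterm i j)]
      rw [Finset.sum_boole]
      congr 1
      rw [SimpleGraph.degree]
      congr 1
      ext j
      simp [SimpleGraph.mem_neighborFinset]
    rw [this, ← Nat.cast_sum]
    rw [SimpleGraph.sum_degrees_eq_twice_card_edges]
    push_cast
    ring
  -- trace A³ ≤ 0
  have htr3 : (A * A * A).trace ≤ 0 := by
    have htr : (A * A * A).trace = ∑ i, ∑ j, ∑ k, A i k * A k j * A j i := by
      simp only [Matrix.trace, Matrix.diag, Matrix.mul_apply, Finset.sum_mul]
    rw [htr]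
    apply Finset.sum_nonpos
    intro i _
    apply Finset.sum_nonpos
    intro j _
    apply Finset.sum_nonpos
    intro k _
    rw [hA]
    simp only
    by_cases h1 : G.Adj i k
    · by_cases h2 : G.Adj k j
      · by_cases h3 : G.Adj j i
        · simp only [h1, h2, h3, if_true]
          have hik : G.Adj i k := h1
          have hkj : G.Adj k j := h2
          have hij : G.Adj i j := h3.symm
          have hne : σ i k * σ k j * σ i j ≠ 1 := by
            intro hc
            exact htri ⟨i, k, j, hik, hkj, hij, hc⟩
          have : σ j i = σ i j := (hsym i j).symm
          rw [this]
          rcases hσ i k hik with e1 | e1 <;> rcases hσ k j hkj with e2 | e2 <;>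
            rcases hσ i j hij with e3 | e3 <;>
            simp only [e1, e2, e3] at hne ⊢ <;> norm_num at hne <;> norm_num
        · simp [h3]
      · simp [h2]
    · simp [h1]
  -- convert traces to power sums of μ
  have hA1 : A ^ 1 = A := pow_one A
  have hA2 : A ^ 2 = A * A := sq A
  have hA3 : A ^ 3 = A * A * A := by rw [pow_succ, sq A]
  have hsum1 : ∑ i, μ i = 0 := by
    have := my_trace_pow hH 1 one_ne_zero
    rw [hA1, htr1] at this
    have h2 := hps (fun x => x)
    simp only [pow_one] at this
    rw [h2, ← this]
  have hsum2 : ∑ i, (μ i)^2 = 2 * (G.edgeFinset.card : ℝ) := by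
    have := my_trace_pow hH 2 two_ne_zero
    rw [hA2, htr2] at this
    have h2 := hps (fun x => x^2)
    rw [h2, ← this]
  have hsum3 : ∑ i, (μ i)^3 ≤ 0 := by
    have := my_trace_pow hH 3 three_ne_zero
    rw [hA3] at this
    have h2 := hps (fun x => x^3)
    rw [h2, ← this]
    exact htr3
  have hmain := mainIneq hn μ hmono hsum1 hsum3 hlam
  rw [hsum2] at hmain
  linarith
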